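/- Let A ∈ ℤ^{d×n} be of rank d, b ∈ ℝⁿ, and ω ∈ ℝ^d. A point x* ∈ ℝⁿ satisfies x* ∈ ℒ_{A,b}⁺ and A·x* = ω if and only if x* is the unique minimizer of the convex optimization problem: minimize −(π/2)·bᵀx − Σ_{j=1}^n ( x_j · arccos(x_j) − √(1 − x_j²) ) subject to A·x = ω and x ∈ (−1,1)ⁿ. In particular, a minimizer exists if and only if ω ∈ Ω_{A,b}⁺, and in that case it is unique. -/

import Mathlib

noncomputable section


/-- The real row span of the integer matrix `A`. -/
def rowSpanR {d n : ℕ} (A : Matrix (Fin d) (Fin n) ℤ) : Submodule ℝ (Fin n → ℝ) :=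
  Submodule.span ℝ (Set.range fun i : Fin d => fun j : Fin n => (A i j : ℝ))

/-- The positive part `ℒ_{A,b}⁺ = cos(L_{A,b} ∩ (0,π)ⁿ)` of the Lissajous variety. -/
def LisPlus {d n : ℕ} (A : Matrix (Fin d) (Fin n) ℤ) (b : Fin n → ℝ) :
    Set (Fin n → ℝ) :=
  (fun x j => Real.cos (x j)) ''
    ({y | ∃ x ∈ rowSpanR A, y = x - (Real.pi / 2) • b} ∩
     {x | ∀ j, x j ∈ Set.Ioo 0 Real.pi})

/-- `Ω_{A,b}⁺ = A(ℒ_{A,b}⁺)`. -/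
def OmegaPlus {d n : ℕ} (A : Matrix (Fin d) (Fin n) ℤ) (b : Fin n → ℝ) :
    Set (Fin d → ℝ) :=
  (fun x i => ∑ j, (A i j : ℝ) * x j) '' LisPlus A b

/-- Feasibility for the convex program of Theorem 5.1. -/
def Feas12 {d n : ℕ} (A : Matrix (Fin d) (Fin n) ℤ) (ω : Fin d → ℝ)
    (x : Fin n → ℝ) : Prop :=
  (∀ i, ∑ j, (A i j : ℝ) * x j = ω i) ∧ ∀ j, x j ∈ Set.Ioo (-1 : ℝ) 1

/-- The objective function of Theorem 5.1. -/
def obj12 {n : ℕ} (b x : Fin n → ℝ) : ℝ :=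
  -(Real.pi / 2) * ∑ j, b j * x j -
    ∑ j, (x j * Real.arccos (x j) - Real.sqrt (1 - x j ^ 2))

open Real Set

/-- The one-variable strictly concave part of the objective. -/
def psi (t : ℝ) : ℝ := t * Real.arccos t - Real.sqrt (1 - t ^ 2)

lemma psi_deriv {t : ℝ} (ht : t ∈ Ioo (-1:ℝ) 1) : HasDerivAt psi (Real.arccos t) t := by
  have h1 : t ≠ -1 := ne_of_gt ht.1
  have h2 : t ≠ 1 := ne_of_lt ht.2
  have hpos : 0 < 1 - t ^ 2 := by nlinarith [ht.1, ht.2]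
  have hd1 : HasDerivAt (fun s => s * Real.arccos s)
      (Real.arccos t + t * (-(1 / Real.sqrt (1 - t ^ 2)))) t := by
    simpa using (hasDerivAt_id' t).fun_mul (Real.hasDerivAt_arccos h1 h2)
  have hd2 : HasDerivAt (fun s : ℝ => Real.sqrt (1 - s ^ 2))
      (1 / (2 * Real.sqrt (1 - t ^ 2)) * (-(2 * t))) t := by
    have hinner : HasDerivAt (fun s : ℝ => 1 - s ^ 2) (-(2 * t)) t := by
      simpa using ((hasDerivAt_pow 2 t).const_sub 1)
    exact (Real.hasDerivAt_sqrt hpos.ne').comp t hinner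
  have hs : Real.sqrt (1 - t ^ 2) > 0 := Real.sqrt_pos.2 hpos
  have := hd1.sub hd2
  refine this.congr_deriv ?_
  field_simp
  ring

lemma psi_cont : Continuous psi :=
  (continuous_id.mul Real.continuous_arccos).sub
    ((continuous_const.sub (continuous_pow 2)).sqrt)

lemma psi_tangent {s t : ℝ} (hs : s ∈ Ioo (-1:ℝ) 1) (ht : t ∈ Ioo (-1:ℝ) 1) (hne : s ≠ t) :
    psi s - psi t < Real.arccos t * (s - t) := by
  rcases hne.lt_or_gt with h | h
  · obtain ⟨c, hc, hderiv⟩ := exists_hasDerivAt_eq_slope psi Real.arccos h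
      psi_cont.continuousOn (fun x hx => psi_deriv ⟨hs.1.trans hx.1, hx.2.trans ht.2⟩)
    have hlt : Real.arccos t < Real.arccos c :=
      Real.strictAntiOn_arccos ⟨(hs.1.trans hc.1).le, (hc.2.trans ht.2).le⟩
        ⟨ht.1.le, ht.2.le⟩ hc.2
    have heq : psi t - psi s = Real.arccos c * (t - s) := by
      have hst : t - s ≠ 0 := by linarith
      field_simp at hderiv
      linarith [hderiv]
    nlinarith
  · obtain ⟨c, hc, hderiv⟩ := exists_hasDerivAt_eq_slope psi Real.arccos h
      psi_cont.continuousOn (fun x hx => psi_deriv ⟨ht.1.trans hx.1, hx.2.trans hs.2⟩)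
    have hlt : Real.arccos c < Real.arccos t :=
      Real.strictAntiOn_arccos ⟨ht.1.le, ht.2.le⟩
        ⟨(ht.1.trans hc.1).le, (hc.2.trans hs.2).le⟩ hc.1
    have heq : psi s - psi t = Real.arccos c * (s - t) := by
      have hst : s - t ≠ 0 := by linarith
      field_simp at hderiv
      linarith [hderiv]
    nlinarith

lemma psi_tangent_le {s t : ℝ} (hs : s ∈ Ioo (-1:ℝ) 1) (ht : t ∈ Ioo (-1:ℝ) 1) :
    psi s - psi t ≤ Real.arccos t * (s - t) := by
  rcases eq_or_ne s t with rfl | hne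
  · simp
  · exact (psi_tangent hs ht hne).le

lemma dot_of_mem_rowspan {d n : ℕ} {A : Matrix (Fin d) (Fin n) ℤ} {v h : Fin n → ℝ}
    (hv : v ∈ rowSpanR A) (hh : ∀ i, ∑ j, (A i j : ℝ) * h j = 0) :
    ∑ j, v j * h j = 0 := by
  rw [rowSpanR, Submodule.mem_span_range_iff_exists_fun] at hv
  obtain ⟨c, hc⟩ := hv
  subst hc
  simp only [Finset.sum_apply, Pi.smul_apply, smul_eq_mul, Finset.sum_mul]
  rw [Finset.sum_comm]
  simp only [mul_assoc, ← Finset.mul_sum]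
  simp [hh]

lemma mem_rowspan_of_dot {d n : ℕ} {A : Matrix (Fin d) (Fin n) ℤ} {v : Fin n → ℝ}
    (hv : ∀ h : Fin n → ℝ, (∀ i, ∑ j, (A i j : ℝ) * h j = 0) → ∑ j, v j * h j = 0) :
    v ∈ rowSpanR A := by
  let S : Submodule ℝ (EuclideanSpace ℝ (Fin n)) :=
    Submodule.span ℝ (Set.range fun i : Fin d => WithLp.toLp 2 fun j : Fin n => (A i j : ℝ))
  have hvS : WithLp.toLp 2 v ∈ S := by
    rw [← Submodule.orthogonal_orthogonal S]
    intro w hw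
    rw [Submodule.mem_orthogonal] at hw
    have hker : ∀ i, ∑ j, (A i j : ℝ) * w j = 0 := by
      intro i
      have := hw (WithLp.toLp 2 fun j : Fin n => (A i j : ℝ)) (Submodule.subset_span ⟨i, rfl⟩)
      simpa [PiLp.inner_apply, RCLike.inner_apply, mul_comm] using this
    have := hv w.ofLp hker
    simpa [real_inner_comm, PiLp.inner_apply, RCLike.inner_apply, mul_comm] using this
  have hle : S ≤ (rowSpanR A).comap (WithLp.linearEquiv 2 ℝ (Fin n → ℝ)).toLinearMap :=
    Submodule.span_le.2 (by rintro _ ⟨i, rfl⟩; exact Submodule.subset_span ⟨i, rfl⟩)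
  exact hle hvS

lemma obj12_eq {n : ℕ} (b x : Fin n → ℝ) :
    obj12 b x = ∑ j, (-(Real.pi / 2) * (b j * x j) - psi (x j)) := by
  simp [obj12, psi, Finset.sum_sub_distrib, Finset.mul_sum]

/-- KKT necessity: a (weak) minimizer satisfies the stationarity condition. -/
lemma kkt_necessary {d n : ℕ} {A : Matrix (Fin d) (Fin n) ℤ} {b xs : Fin n → ℝ}
    (hfeas : Feas12 A (fun i => ∑ j, (A i j : ℝ) * xs j) xs)
    (hmin : ∀ x : Fin n → ℝ, Feas12 A (fun i => ∑ j, (A i j : ℝ) * xs j) x →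
      obj12 b xs ≤ obj12 b x) :
    (fun j => Real.arccos (xs j) + (Real.pi / 2) * b j) ∈ rowSpanR A := by
  apply mem_rowspan_of_dot
  intro h hker
  set g : ℝ → ℝ := fun t => obj12 b (fun j => xs j + t * h j) with hg
  have hderiv : HasDerivAt g
      (∑ j, (-(Real.pi / 2) * (b j * h j) - Real.arccos (xs j) * h j)) 0 := by
    have : ∀ j : Fin n, HasDerivAt (fun t : ℝ => -(Real.pi / 2) * (b j * (xs j + t * h j)) -
        psi (xs j + t * h j)) (-(Real.pi / 2) * (b j * h j) - Real.arccos (xs j) * h j) 0 := by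
      intro j
      have hx : HasDerivAt (fun t : ℝ => xs j + t * h j) (h j) 0 := by
        simpa using ((hasDerivAt_id (0:ℝ)).mul_const (h j)).const_add (xs j)
      have h1 : HasDerivAt (fun t : ℝ => -(Real.pi / 2) * (b j * (xs j + t * h j)))
          (-(Real.pi / 2) * (b j * h j)) 0 := by
        simpa [mul_assoc] using ((hx.const_mul (b j)).const_mul (-(Real.pi / 2)))
      have h2 : HasDerivAt (fun t : ℝ => psi (xs j + t * h j))
          (Real.arccos (xs j) * h j) 0 := by
        have := (psi_deriv (by simpa using hfeas.2 j)).comp 0 hx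
        simpa [Function.comp_def] using this
      exact h1.sub h2
    have := HasDerivAt.fun_sum (u := Finset.univ) (fun j _ => this j)
    convert this using 1
    · rfl
    · rfl
    · funext t
      show obj12 b _ = _
      rw [obj12_eq]
  have hmin0 : IsLocalMin g 0 := by
    have hev : ∀ᶠ t in nhds (0:ℝ), ∀ j, xs j + t * h j ∈ Ioo (-1:ℝ) 1 := by
      rw [Filter.eventually_all]
      intro j
      have hc : Continuous (fun t : ℝ => xs j + t * h j) := by continuity
      have : (fun t : ℝ => xs j + t * h j) 0 ∈ Ioo (-1:ℝ) 1 := by simpa using hfeas.2 j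
      exact hc.continuousAt.eventually_mem (isOpen_Ioo.mem_nhds this)
    have h0 : g 0 = obj12 b xs := by simp [hg]
    filter_upwards [hev] with t ht
    show g 0 ≤ g t
    rw [h0]
    apply hmin
    refine ⟨fun i => ?_, ht⟩
    have : ∑ j, (A i j : ℝ) * (xs j + t * h j)
        = ∑ j, (A i j : ℝ) * xs j + t * ∑ j, (A i j : ℝ) * h j := by
      rw [Finset.mul_sum, ← Finset.sum_add_distrib]; congr 1; funext j; ring
    rw [this, hker i]; ring
  have hzero := hmin0.hasDerivAt_eq_zero hderiv
  have : ∑ j, (Real.arccos (xs j) + Real.pi / 2 * b j) * h j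
      = -∑ j, (-(Real.pi / 2) * (b j * h j) - Real.arccos (xs j) * h j) := by
    rw [← Finset.sum_neg_distrib]; congr 1; funext j; ring
  rw [this, hzero, neg_zero]

/-- KKT sufficiency: stationarity implies strict global minimality. -/
lemma kkt_sufficient {d n : ℕ} {A : Matrix (Fin d) (Fin n) ℤ} {b xs : Fin n → ℝ}
    {ω : Fin d → ℝ} (hfeas : Feas12 A ω xs)
    (hv : (fun j => Real.arccos (xs j) + (Real.pi / 2) * b j) ∈ rowSpanR A) :
    ∀ x : Fin n → ℝ, Feas12 A ω x → x ≠ xs → obj12 b xs < obj12 b x := by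
  intro x hx hne
  have hker : ∀ i, ∑ j, (A i j : ℝ) * (x j - xs j) = 0 := by
    intro i
    have : ∑ j, (A i j : ℝ) * (x j - xs j)
        = ∑ j, (A i j : ℝ) * x j - ∑ j, (A i j : ℝ) * xs j := by
      rw [← Finset.sum_sub_distrib]; congr 1; funext j; ring
    rw [this, hx.1 i, hfeas.1 i, sub_self]
  have hdot := dot_of_mem_rowspan hv hker
  set S1 := ∑ j, b j * (x j - xs j) with hS1
  set S2 := ∑ j, (psi (x j) - psi (xs j)) with hS2
  set S3 := ∑ j, Real.arccos (xs j) * (x j - xs j) with hS3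
  have hdot' : S3 + Real.pi / 2 * S1 = 0 := by
    rw [hS3, hS1, Finset.mul_sum, ← Finset.sum_add_distrib, ← hdot]
    congr 1; funext j; ring
  have hS2lt : S2 < S3 := by
    obtain ⟨j0, hj0⟩ : ∃ j, x j ≠ xs j := by
      by_contra hc
      push_neg at hc
      exact hne (funext hc)
    exact Finset.sum_lt_sum
      (fun j _ => psi_tangent_le (hx.2 j) (hfeas.2 j))
      ⟨j0, Finset.mem_univ j0, psi_tangent (hx.2 j0) (hfeas.2 j0) hj0⟩
  have hobj : obj12 b x - obj12 b xs = -(Real.pi / 2) * S1 - S2 := by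
    rw [obj12_eq, obj12_eq, ← Finset.sum_sub_distrib, hS1, hS2, Finset.mul_sum,
      ← Finset.sum_sub_distrib]
    congr 1; funext j; ring
  linarith

/-- Membership in the positive Lissajous variety, characterized via `arccos`. -/
lemma mem_lisPlus_iff {d n : ℕ} {A : Matrix (Fin d) (Fin n) ℤ} {b x : Fin n → ℝ} :
    x ∈ LisPlus A b ↔ ((∀ j, x j ∈ Ioo (-1:ℝ) 1) ∧
      (fun j => Real.arccos (x j) + (Real.pi / 2) * b j) ∈ rowSpanR A) := by
  constructor
  · rintro ⟨z, ⟨⟨u, hu, hz⟩, hbox⟩, rfl⟩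
    have harc : ∀ j, Real.arccos (Real.cos (z j)) = z j :=
      fun j => Real.arccos_cos (hbox j).1.le (hbox j).2.le
    constructor
    · intro j
      constructor
      · have := Real.strictAntiOn_cos ⟨(hbox j).1.le, (hbox j).2.le⟩
          ⟨le_refl 0 |>.trans Real.pi_pos.le, le_refl _⟩ (hbox j).2
        simpa using this
      · have := Real.strictAntiOn_cos ⟨le_refl 0, Real.pi_pos.le⟩
          ⟨(hbox j).1.le, (hbox j).2.le⟩ (hbox j).1
        simpa using this
    · have : (fun j => Real.arccos (Real.cos (z j)) + (Real.pi / 2) * b j) = u := by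
        funext j
        rw [harc j]
        have := congrFun hz j
        simp only [Pi.sub_apply, Pi.smul_apply, smul_eq_mul] at this
        linarith
      rw [show (fun j => Real.arccos ((fun x j => Real.cos (x j)) z j) + Real.pi / 2 * b j)
        = (fun j => Real.arccos (Real.cos (z j)) + (Real.pi / 2) * b j) from rfl, this]
      exact hu
  · rintro ⟨hbox, hu⟩
    refine ⟨fun j => Real.arccos (x j), ⟨⟨fun j => Real.arccos (x j) + (Real.pi / 2) * b j,
      hu, ?_⟩, fun j => ⟨Real.arccos_pos.2 (hbox j).2, ?_⟩⟩, ?_⟩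
    · funext j; simp
    · exact lt_of_le_of_ne (Real.arccos_le_pi _)
        (fun h => absurd (Real.arccos_eq_pi.1 h) (by linarith [(hbox j).1]))
    · funext j
      exact Real.cos_arccos (hbox j).1.le (hbox j).2.le

/-- Theorem 5.1: `x* ∈ ℒ_{A,b}⁺ ∩ {Ax = ω}` iff `x*` is the unique minimizer of the
convex program; a minimizer exists iff `ω ∈ Ω_{A,b}⁺`, and in that case it is unique. -/
theorem stmt12 {d n : ℕ} (A : Matrix (Fin d) (Fin n) ℤ)
    (hrank : (A.map fun z => (z : ℚ)).rank = d) (b : Fin n → ℝ) (ω : Fin d → ℝ) :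
    (∀ xstar : Fin n → ℝ,
      (xstar ∈ LisPlus A b ∧ ∀ i, ∑ j, (A i j : ℝ) * xstar j = ω i) ↔
      (Feas12 A ω xstar ∧ ∀ x : Fin n → ℝ, Feas12 A ω x → x ≠ xstar →
        obj12 b xstar < obj12 b x)) ∧
    ((∃ xstar : Fin n → ℝ, Feas12 A ω xstar ∧
        ∀ x : Fin n → ℝ, Feas12 A ω x → obj12 b xstar ≤ obj12 b x) ↔
      ω ∈ OmegaPlus A b) ∧
    (∀ x₁ x₂ : Fin n → ℝ,
      (Feas12 A ω x₁ ∧ ∀ x, Feas12 A ω x → obj12 b x₁ ≤ obj12 b x) →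
      (Feas12 A ω x₂ ∧ ∀ x, Feas12 A ω x → obj12 b x₂ ≤ obj12 b x) → x₁ = x₂) := by
  -- from a weak minimizer we get stationarity (KKT necessity)
  have hkkt : ∀ xs : Fin n → ℝ, Feas12 A ω xs →
      (∀ x : Fin n → ℝ, Feas12 A ω x → obj12 b xs ≤ obj12 b x) →
      (fun j => Real.arccos (xs j) + (Real.pi / 2) * b j) ∈ rowSpanR A := by
    intro xs hfeas hmin
    have hω : (fun i => ∑ j, (A i j : ℝ) * xs j) = ω := funext hfeas.1
    exact kkt_necessary (hω ▸ hfeas) (fun x hx => hmin x (hω ▸ hx))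
  have part1 : ∀ xstar : Fin n → ℝ,
      (xstar ∈ LisPlus A b ∧ ∀ i, ∑ j, (A i j : ℝ) * xstar j = ω i) ↔
      (Feas12 A ω xstar ∧ ∀ x : Fin n → ℝ, Feas12 A ω x → x ≠ xstar →
        obj12 b xstar < obj12 b x) := by
    intro xs
    constructor
    · rintro ⟨hlis, hA⟩
      obtain ⟨hbox, hv⟩ := mem_lisPlus_iff.1 hlis
      have hfeas : Feas12 A ω xs := ⟨hA, hbox⟩
      exact ⟨hfeas, kkt_sufficient hfeas hv⟩
    · rintro ⟨hfeas, hstrict⟩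
      have hmin : ∀ x : Fin n → ℝ, Feas12 A ω x → obj12 b xs ≤ obj12 b x := by
        intro x hx
        rcases eq_or_ne x xs with rfl | hne
        · exact le_refl _
        · exact (hstrict x hx hne).le
      exact ⟨mem_lisPlus_iff.2 ⟨hfeas.2, hkkt xs hfeas hmin⟩, hfeas.1⟩
  refine ⟨part1, ?_, ?_⟩
  · constructor
    · rintro ⟨xs, hfeas, hmin⟩
      have hlis : xs ∈ LisPlus A b := mem_lisPlus_iff.2 ⟨hfeas.2, hkkt xs hfeas hmin⟩
      exact ⟨xs, hlis, funext hfeas.1⟩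
    · rintro ⟨xs, hlis, hA⟩
      have hA' : ∀ i, ∑ j, (A i j : ℝ) * xs j = ω i := fun i => congrFun hA i
      obtain ⟨hfeas, hstrict⟩ := (part1 xs).1 ⟨hlis, hA'⟩
      refine ⟨xs, hfeas, fun x hx => ?_⟩
      rcases eq_or_ne x xs with rfl | hne
      · exact le_refl _
      · exact (hstrict x hx hne).le
  · rintro x₁ x₂ ⟨hf1, hm1⟩ ⟨hf2, hm2⟩
    by_contra hne
    have hv1 := hkkt x₁ hf1 hm1
    have hstrict := kkt_sufficient hf1 hv1
    have h1 : obj12 b x₁ < obj12 b x₂ := hstrict x₂ hf2 (fun h => hne h.symm)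
    exact absurd (hm2 x₁ hf1) (not_le.2 h1)
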